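/- Causal reciprocal rule: the partial stream inverse (·)^{-1}, characterized by σ × σ^{-1} = [1] for σ_0 ≠ 0, is causally differentiable at every σ with σ_0 ≠ 0, and D(·)^{-1}(σ)(Δσ) = [-1] × σ^{-1} × σ^{-1} × Δσ, where × is the Cauchy product. -/

import Mathlib

/-- A stream function is *causal* if initial segments of length `k+1` of the
input determine initial segments of length `k+1` of the output. -/
def Causal {A B : Type*} (f : (ℕ → A) → (ℕ → B)) : Prop :=
  ∀ σ τ : ℕ → A, ∀ k : ℕ, (∀ i ≤ k, σ i = τ i) → ∀ i ≤ k, f σ i = f τ i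

/-- Extend a finite word to a stream (padding with the first letter). -/
def extW {A : Type*} {k : ℕ} (w : Fin (k+1) → A) : ℕ → A :=
  fun n => if h : n < k+1 then w ⟨n, h⟩ else w 0

/-- The `k`-th pointwise approximant (unrolling) of a causal function. -/
def U {A B : Type*} (f : (ℕ → A) → (ℕ → B)) (k : ℕ) (w : Fin (k+1) → A) : B :=
  f (extW w) k

/-- The `k`-th stringwise approximant (truncation) of a causal function. -/
def T {A B : Type*} (f : (ℕ → A) → (ℕ → B)) (k : ℕ) (w : Fin (k+1) → A) :
    Fin (k+1) → B := fun i => f (extW w) i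

/-- The initial segment `σ_{0:k}` of a stream, as a finite word. -/
def init {A : Type*} (σ : ℕ → A) (k : ℕ) : Fin (k+1) → A := fun i => σ i

/-- A causal function is differentiable at a stream `σ` when all of its
pointwise approximants are differentiable at `σ_{0:k}`. -/
def CausalDiffAt {E F : Type*} [NormedAddCommGroup E] [NormedSpace ℝ E]
    [NormedAddCommGroup F] [NormedSpace ℝ F]
    (f : (ℕ → E) → ℕ → F) (σ : ℕ → E) : Prop :=
  ∀ k, DifferentiableAt ℝ (U f k) (init σ k)

/-- `L` is the causal derivative of `f` at `σ`: the `k`-th pointwise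
approximant of `L` is the Jacobian of `U_k(f)` at `σ_{0:k}`. -/
def IsCausalDerivAt {E F : Type*} [NormedAddCommGroup E] [NormedSpace ℝ E]
    [NormedAddCommGroup F] [NormedSpace ℝ F]
    (f : (ℕ → E) → ℕ → F) (σ : ℕ → E) (L : (ℕ → E) → ℕ → F) : Prop :=
  ∀ (Δ : ℕ → E) (k : ℕ), L Δ k = fderiv ℝ (U f k) (init σ k) (init Δ k)

/-- The Cauchy product of two real streams. -/
def cauchy (σ τ : ℕ → ℝ) : ℕ → ℝ :=
  fun k => ∑ i ∈ Finset.range (k+1), σ i * τ (k - i)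

/-- The constant stream `[r] = (r, 0, 0, ...)`. -/
def streamConst (r : ℝ) : ℕ → ℝ := fun k => if k = 0 then r else 0

/-- The stream inverse for the Cauchy product, defined when `σ 0 ≠ 0`. -/
noncomputable def sinv (σ : ℕ → ℝ) : ℕ → ℝ
  | 0 => 1 / σ 0
  | k+1 => -(1 / σ 0) * ∑ i : Fin (k+1), σ (k + 1 - (i : ℕ)) * sinv σ i

lemma mkS_cauchy (a b : ℕ → ℝ) :
    PowerSeries.mk (cauchy a b) = PowerSeries.mk a * PowerSeries.mk b := by
  ext n
  rw [PowerSeries.coeff_mk, PowerSeries.coeff_mul,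
    Finset.Nat.sum_antidiagonal_eq_sum_range_succ_mk]
  simp [cauchy]

lemma mkS_const (r : ℝ) : PowerSeries.mk (streamConst r) = PowerSeries.C r := by
  ext n
  simp [streamConst, PowerSeries.coeff_C]

lemma cauchy_sinv (σ : ℕ → ℝ) (hσ : σ 0 ≠ 0) (n : ℕ) :
    cauchy σ (sinv σ) n = streamConst 1 n := by
  cases n with
  | zero => simp [cauchy, streamConst, sinv]; field_simp
  | succ n =>
    have hrec : σ 0 * sinv σ (n+1) = -∑ i ∈ Finset.range (n+1), σ (n + 1 - i) * sinv σ i := by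
      rw [sinv, show (∑ i : Fin (n+1), σ (n + 1 - (i:ℕ)) * sinv σ i)
          = ∑ i ∈ Finset.range (n+1), σ (n + 1 - i) * sinv σ i from
        Fin.sum_univ_eq_sum_range (fun j => σ (n + 1 - j) * sinv σ j) (n+1)]
      field_simp
    have hrefl : ∑ i ∈ Finset.range (n+1), σ (i+1) * sinv σ (n + 1 - (i+1))
        = ∑ i ∈ Finset.range (n+1), σ (n + 1 - i) * sinv σ i := by
      rw [← Finset.sum_range_reflect]
      apply Finset.sum_congr rfl
      intro i hi
      simp only [Finset.mem_range] at hi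
      congr 2 <;> omega
    show ∑ i ∈ Finset.range (n+1+1), σ i * sinv σ (n + 1 - i) = _
    rw [Finset.sum_range_succ', hrefl, Nat.sub_zero, hrec]
    simp [streamConst]

lemma mkS_sinv (σ : ℕ → ℝ) (hσ : σ 0 ≠ 0) :
    PowerSeries.mk σ * PowerSeries.mk (sinv σ) = 1 := by
  rw [← mkS_cauchy]
  ext n
  rw [PowerSeries.coeff_mk, cauchy_sinv σ hσ]
  simp [streamConst, PowerSeries.coeff_one]

lemma sinv_congr (σ τ : ℕ → ℝ) : ∀ n, (∀ i ≤ n, σ i = τ i) → sinv σ n = sinv τ n := by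
  intro n
  induction n using Nat.strong_induction_on with
  | _ n ih =>
    intro h
    cases n with
    | zero => simp [sinv, h 0 le_rfl]
    | succ n =>
      rw [sinv, sinv, h 0 (by omega)]
      congr 1
      apply Finset.sum_congr rfl
      intro i _
      rw [h (n + 1 - (i:ℕ)) (by omega),
        ih i (by omega) (fun j hj => h j (by omega))]

lemma sinv_diffAt {E : Type*} [NormedAddCommGroup E] [NormedSpace ℝ E]
    (c : ℕ → E → ℝ) (x : E) (hc : ∀ i, DifferentiableAt ℝ (c i) x)
    (h0 : c 0 x ≠ 0) :
    ∀ n, DifferentiableAt ℝ (fun e => sinv (fun i => c i e) n) x := by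
  intro n
  induction n using Nat.strong_induction_on with
  | _ n ih =>
    cases n with
    | zero =>
      simp only [sinv, one_div]
      exact (hc 0).inv h0
    | succ n =>
      simp only [sinv]
      apply DifferentiableAt.mul
      · simp only [one_div]
        exact ((hc 0).inv h0).neg
      · exact DifferentiableAt.fun_sum fun i _ => (hc _).mul (ih i i.isLt)

theorem causal_reciprocal_rule (σ : ℕ → ℝ) (hσ : σ 0 ≠ 0) :
    CausalDiffAt sinv σ ∧
    IsCausalDerivAt sinv σ (fun Δ =>
      cauchy (cauchy (cauchy (streamConst (-1)) (sinv σ)) (sinv σ)) Δ) := by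
  -- coordinate functions for the unrolling
  have hcoord : ∀ (k : ℕ) (i : ℕ),
      DifferentiableAt ℝ (fun w : Fin (k+1) → ℝ => extW w i) (init σ k) := by
    intro k i
    by_cases h : i < k + 1
    · simp only [extW, dif_pos h]
      exact (ContinuousLinearMap.proj (R := ℝ) (φ := fun _ : Fin (k+1) => ℝ)
        ⟨i, h⟩).differentiableAt
    · simp only [extW, dif_neg h]
      exact (ContinuousLinearMap.proj (R := ℝ) (φ := fun _ : Fin (k+1) => ℝ)
        0).differentiableAt
  have h0ext : ∀ k : ℕ, extW (init σ k) 0 = σ 0 := by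
    intro k; simp [extW, init]
  have hdiffU : ∀ k, DifferentiableAt ℝ (U sinv k) (init σ k) := by
    intro k
    exact sinv_diffAt (fun i (w : Fin (k+1) → ℝ) => extW w i) (init σ k)
      (hcoord k) (by show extW (init σ k) 0 ≠ 0; rw [h0ext k]; exact hσ) k
  refine ⟨hdiffU, ?_⟩
  intro Δ k
  -- the perturbed stream
  set g : ℝ → ℕ → ℝ := fun t i => σ i + t * Δ i with hg
  have hg0 : g 0 = σ := by funext i; simp [hg]
  have hcdiff : ∀ i, DifferentiableAt ℝ (fun t : ℝ => σ i + t * Δ i) 0 :=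
    fun i => (differentiableAt_const _).add (differentiableAt_fun_id.mul
      (differentiableAt_const _))
  have hdiff : ∀ n, DifferentiableAt ℝ (fun t => sinv (g t) n) 0 := by
    intro n
    exact sinv_diffAt (fun i t => σ i + t * Δ i) 0 hcdiff (by simpa using hσ) n
  set D : ℕ → ℝ := fun n => deriv (fun t => sinv (g t) n) 0 with hDdef
  have hD : ∀ n, HasDerivAt (fun t => sinv (g t) n) (D n) 0 :=
    fun n => (hdiff n).hasDerivAt
  -- differentiate the identity g t × sinv (g t) = [1]
  have key : ∀ n, cauchy Δ (sinv σ) n + cauchy σ D n = 0 := by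
    intro n
    set Φ : ℝ → ℝ := fun t => ∑ i ∈ Finset.range (n+1), g t i * sinv (g t) (n - i) with hΦ
    have h1 : HasDerivAt Φ
        (∑ i ∈ Finset.range (n+1), (Δ i * sinv σ (n - i) + σ i * D (n - i))) 0 := by
      apply HasDerivAt.fun_sum
      intro i _
      have ha : HasDerivAt (fun t : ℝ => g t i) (Δ i) 0 := by
        simpa [hg] using ((hasDerivAt_id (0:ℝ)).mul_const (Δ i)).const_add (σ i)
      have := ha.fun_mul (hD (n - i))
      simpa [hg0, hg] using this
    have h2 : Φ =ᶠ[nhds 0] fun _ => streamConst 1 n := by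
      have hcont : ContinuousAt (fun t : ℝ => σ 0 + t * Δ 0) 0 := by fun_prop
      have hne : ∀ᶠ t in nhds (0:ℝ), σ 0 + t * Δ 0 ≠ 0 := by
        apply hcont.eventually_ne
        simpa using hσ
      filter_upwards [hne] with t ht
      exact cauchy_sinv (g t) (by simpa [hg] using ht) n
    have h3 : HasDerivAt Φ 0 0 :=
      (hasDerivAt_const 0 (streamConst 1 n)).congr_of_eventuallyEq h2
    have h4 := h1.unique h3
    rw [Finset.sum_add_distrib] at h4
    simpa [cauchy] using h4
  -- power series algebra
  have hmul : PowerSeries.mk σ * PowerSeries.mk D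
      = -(PowerSeries.mk Δ * PowerSeries.mk (sinv σ)) := by
    rw [← mkS_cauchy, ← mkS_cauchy]
    ext n
    rw [PowerSeries.coeff_mk, map_neg, PowerSeries.coeff_mk]
    have := key n
    linarith
  have hDps : PowerSeries.mk D
      = PowerSeries.mk (cauchy (cauchy (cauchy (streamConst (-1)) (sinv σ)) (sinv σ)) Δ) := by
    rw [mkS_cauchy, mkS_cauchy, mkS_cauchy, mkS_const]
    have hunit := mkS_sinv σ hσ
    calc PowerSeries.mk D
        = (PowerSeries.mk σ * PowerSeries.mk (sinv σ)) * PowerSeries.mk D := by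
          rw [hunit, one_mul]
      _ = PowerSeries.mk (sinv σ) * (PowerSeries.mk σ * PowerSeries.mk D) := by ring
      _ = PowerSeries.mk (sinv σ) * (-(PowerSeries.mk Δ * PowerSeries.mk (sinv σ))) := by
          rw [hmul]
      _ = _ := by
          rw [map_neg, map_one]
          ring
  have hDk : D k = cauchy (cauchy (cauchy (streamConst (-1)) (sinv σ)) (sinv σ)) Δ k := by
    have := congrArg (PowerSeries.coeff k) hDps
    simpa [PowerSeries.coeff_mk] using this
  -- relate D k to the fderiv
  have hline : HasDerivAt (fun t : ℝ => init σ k + t • init Δ k) (init Δ k) 0 := by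
    simpa using ((hasDerivAt_id (0:ℝ)).smul_const (init Δ k)).const_add (init σ k)
  have hpt : init σ k + (0:ℝ) • init Δ k = init σ k := by simp
  have hcomp : HasDerivAt (fun t : ℝ => U sinv k (init σ k + t • init Δ k))
      (fderiv ℝ (U sinv k) (init σ k) (init Δ k)) 0 := by
    have hf := (hdiffU k).hasFDerivAt
    rw [← hpt] at hf
    have h := hf.comp_hasDerivAt 0 hline
    rw [hpt] at h
    simpa [Function.comp_def] using h
  have heqfun : (fun t : ℝ => U sinv k (init σ k + t • init Δ k))
      = fun t => sinv (g t) k := by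
    funext t
    show sinv (extW (init σ k + t • init Δ k)) k = sinv (g t) k
    apply sinv_congr
    intro i hi
    have hi' : i < k + 1 := by omega
    simp [extW, init, hg, dif_pos hi']
  rw [heqfun] at hcomp
  exact ((hD k).unique hcomp) ▸ hDk.symm
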